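/- Let X be a Banach space with norm ‖·‖, let ξ < ω₁, let (x_i) be a C-ℓ_1^{ω^ξ} spreading model in (X, ‖·‖), and let |·| be an equivalent norm on X. Then for each ε > 0 there exist a blocking (y_i) of (x_i) and λ > 0 such that: (i) (y_i) is a (1+ε)-ℓ_1^{ω^ξ} spreading model in (X, |·|), and (ii) (λ y_i) is a C-ℓ_1^{ω^ξ} spreading model in (X, ‖·‖). -/

import Mathlib

open Filter Topology

noncomputable section

/-- The first uncountable ordinal `ω₁`. -/
def omega1 : Ordinal := (Cardinal.aleph 1).ord

/-- The combinatorial operation `𝓕[𝓖]` on families of finite subsets of `ℕ`: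
all unions `E₁ ∪ ⋯ ∪ Eₙ` with `E₁ < ⋯ < Eₙ` nonempty members of `𝓖` and
`(min Eᵢ)ᵢ ∈ 𝓕`. -/
def famOp (F G : Set (Finset ℕ)) : Set (Finset ℕ) :=
  {E | ∃ (n : ℕ) (Es : ℕ → Finset ℕ),
    (∀ i < n, Es i ∈ G) ∧ (∀ i < n, (Es i).Nonempty) ∧
    (∀ i j : ℕ, i < j → j < n → ∀ a ∈ Es i, ∀ b ∈ Es j, a < b) ∧
    (Finset.image (fun i => sInf ((Es i : Set ℕ))) (Finset.range n) ∈ F) ∧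
    E = (Finset.range n).biUnion Es}

/-- The first Schreier family `𝓢₁ = {E : |E| ≤ min E}`. -/
def schreierOne : Set (Finset ℕ) := {E : Finset ℕ | ∀ n ∈ E, E.card ≤ n}

/-- A system of Schreier families `(𝓢_ξ)` together with the fixed cofinal sequences
`(ξ_n)` used at countable limit ordinals: `𝓢_0 = {∅} ∪ {{n} : n ∈ ℕ}`,
`𝓢_{ξ+1} = 𝓢₁[𝓢_ξ]`, and at a countable limit `ξ`,
`𝓢_ξ = {E : ∃ n, n ≤ min E ∧ E ∈ 𝓢_{ξ_n}}` where `ξ_n ↑ ξ` and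
`𝓢_{ξ_n} ⊆ 𝓢_{ξ_{n+1}}`. -/
structure SchreierSystem where
  S : Ordinal → Set (Finset ℕ)
  seq : Ordinal → ℕ → Ordinal
  S_zero : S 0 = {E : Finset ℕ | E = ∅ ∨ ∃ n : ℕ, E = {n}}
  S_succ : ∀ ξ : Ordinal, S (ξ + 1) = famOp schreierOne (S ξ)
  seq_strictMono : ∀ ξ : Ordinal, ξ < omega1 → Order.IsSuccLimit ξ → StrictMono (seq ξ)
  seq_lt : ∀ ξ : Ordinal, ξ < omega1 → Order.IsSuccLimit ξ → ∀ n : ℕ, seq ξ n < ξ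
  seq_iSup : ∀ ξ : Ordinal, ξ < omega1 → Order.IsSuccLimit ξ → (⨆ n : ℕ, seq ξ n) = ξ
  S_seq_mono : ∀ ξ : Ordinal, ξ < omega1 → Order.IsSuccLimit ξ → ∀ n : ℕ, S (seq ξ n) ⊆ S (seq ξ (n + 1))
  S_limit : ∀ ξ : Ordinal, ξ < omega1 → Order.IsSuccLimit ξ →
    S ξ = {E : Finset ℕ | ∃ n : ℕ, (∀ m ∈ E, n ≤ m) ∧ E ∈ S (seq ξ n)}

section SpreadingModels

variable {V : Type*} [AddCommGroup V] [Module ℝ V]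

/-- `x` is a (Schauder) basic sequence with respect to the norm function `Nm`. -/
def IsBasicSeqWrt (Nm : V → ℝ) (x : ℕ → V) : Prop :=
  (∀ n, x n ≠ 0) ∧ ∃ K : ℝ, 0 < K ∧ ∀ (a : ℕ → ℝ) (m n : ℕ), m ≤ n →
    Nm (∑ i ∈ Finset.range m, a i • x i) ≤ K * Nm (∑ i ∈ Finset.range n, a i • x i)

/-- `x` is a `K`-`ℓ₁^𝓕` spreading model with respect to the norm function `Nm`:
a basic sequence such that for some `c, C > 0` with `c * C ≤ K`,
`c⁻¹ Σ_{i∈E} |a i| ≤ Nm (Σ_{i∈E} a i • x i) ≤ C Σ_{i∈E} |a i|` for all `E ∈ 𝓕`. -/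
def IsL1SMWrt (Nm : V → ℝ) (F : Set (Finset ℕ)) (K : ℝ) (x : ℕ → V) : Prop :=
  IsBasicSeqWrt Nm x ∧ ∃ c C : ℝ, 0 < c ∧ 0 < C ∧ c * C ≤ K ∧
    ∀ E : Finset ℕ, E ∈ F → ∀ a : ℕ → ℝ,
      c⁻¹ * (∑ i ∈ E, |a i|) ≤ Nm (∑ i ∈ E, a i • x i) ∧
      Nm (∑ i ∈ E, a i • x i) ≤ C * (∑ i ∈ E, |a i|)

/-- `x` is a `K`-`c₀^𝓕` spreading model with respect to the norm function `Nm`: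
a basic sequence such that for some `c, C > 0` with `c * C ≤ K`,
`c⁻¹ max_{i∈E} |a i| ≤ Nm (Σ_{i∈E} a i • x i) ≤ C max_{i∈E} |a i|` for all `E ∈ 𝓕`. -/
def IsC0SMWrt (Nm : V → ℝ) (F : Set (Finset ℕ)) (K : ℝ) (x : ℕ → V) : Prop :=
  IsBasicSeqWrt Nm x ∧ ∃ c C : ℝ, 0 < c ∧ 0 < C ∧ c * C ≤ K ∧
    ∀ E : Finset ℕ, E ∈ F → ∀ hE : E.Nonempty, ∀ a : ℕ → ℝ,
      c⁻¹ * (E.sup' hE fun i => |a i|) ≤ Nm (∑ i ∈ E, a i • x i) ∧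
      Nm (∑ i ∈ E, a i • x i) ≤ C * (E.sup' hE fun i => |a i|)

/-- `y` is the blocking of `x` given by `y n = Σ_{j ∈ E n} a j • x j`, for successive
finite sets `E 0 < E 1 < ⋯`, with each `y n ≠ 0`. -/
def IsBlockingOf (x y : ℕ → V) (E : ℕ → Finset ℕ) (a : ℕ → ℝ) : Prop :=
  (∀ n, y n ≠ 0) ∧ (∀ m n : ℕ, m < n → ∀ i ∈ E m, ∀ j ∈ E n, i < j) ∧
  (∀ n, y n = ∑ j ∈ E n, a j • x j)

end SpreadingModels

/-- `N` is a norm on `V` equivalent to the ambient norm. -/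
def IsEquivNorm {V : Type*} [NormedAddCommGroup V] [NormedSpace ℝ V] (N : V → ℝ) : Prop :=
  (∀ x y : V, N (x + y) ≤ N x + N y) ∧
  (∀ (a : ℝ) (x : V), N (a • x) = |a| * N x) ∧
  (∃ c C : ℝ, 0 < c ∧ 0 < C ∧ ∀ x : V, c * ‖x‖ ≤ N x ∧ N x ≤ C * ‖x‖)

section Stmt10Aux

/-! ### Ordinal facts -/

lemma aux_add_lt_omega1 {a b : Ordinal} (ha : a < omega1) (hb : b < omega1) :
    a + b < omega1 := by
  rw [omega1, Cardinal.lt_ord] at ha hb ⊢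
  rw [Ordinal.card_add]
  exact Cardinal.add_lt_of_lt (Cardinal.aleph0_le_aleph 1) ha hb

lemma aux_opow_lt_omega1 : ∀ x : Ordinal, x < omega1 → Ordinal.omega0 ^ x < omega1 := by
  intro x
  induction x using Ordinal.induction with
  | h ξ IH =>
    intro hξ
    rcases Ordinal.zero_or_succ_or_isSuccLimit ξ with h0 | ⟨a, ha⟩ | hlim
    · subst h0
      rw [Ordinal.opow_zero, omega1, Cardinal.lt_ord, Ordinal.card_one]
      exact Cardinal.one_lt_aleph0.trans Cardinal.aleph0_lt_aleph_one
    · subst ha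
      have h1 : a < omega1 := lt_trans (Order.lt_succ a) hξ
      have h2 := IH a (Order.lt_succ a) h1
      rw [omega1, Cardinal.lt_ord] at h2 ⊢
      rw [Ordinal.opow_succ, Ordinal.card_mul, Ordinal.card_omega0]
      exact Cardinal.mul_lt_of_lt (Cardinal.aleph0_le_aleph 1) h2
        Cardinal.aleph0_lt_aleph_one
    · rw [Ordinal.opow_limit Ordinal.omega0_ne_zero hlim]
      have hcard : ξ.card < Cardinal.aleph 1 := by
        rw [omega1, Cardinal.lt_ord] at hξ; exact hξ
      exact (Ordinal.iSup_Iio_eq_bsup (o := ξ) (f := fun a _ => Ordinal.omega0 ^ a)).trans_lt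
        (Cardinal.bsup_lt_ord_of_isRegular Cardinal.isRegular_aleph_one hcard
        (fun i hi => IH i hi (lt_trans hi hξ)))

/-! ### Basic facts about the Schreier families -/

lemma S_empty (SS : SchreierSystem) : ∀ ζ : Ordinal, ζ < omega1 → ∅ ∈ SS.S ζ := by
  intro ζ
  induction ζ using Ordinal.induction with
  | h ζ IH =>
    intro hζ
    rcases Ordinal.zero_or_succ_or_isSuccLimit ζ with h0 | ⟨a, ha⟩ | hlim
    · subst h0; rw [SS.S_zero]; exact Or.inl rfl
    · subst ha
      rw [← Ordinal.add_one_eq_succ, SS.S_succ]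
      refine ⟨0, fun _ => ∅, ?_, ?_, ?_, ?_, ?_⟩
      · intro i hi; omega
      · intro i hi; omega
      · intro i j hij hj; omega
      · simp only [Finset.range_zero, Finset.image_empty]
        intro n hn; simp at hn
      · simp
    · rw [SS.S_limit ζ hζ hlim]
      have h0 := SS.seq_lt ζ hζ hlim 0
      exact ⟨0, by simp, IH _ h0 (lt_trans h0 hζ)⟩

lemma S_succ_single (SS : SchreierSystem) {ζ : Ordinal} {A : Finset ℕ}
    (hA : A ∈ SS.S ζ) (hne : A.Nonempty) (h1 : ∀ j ∈ A, 1 ≤ j) :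
    A ∈ SS.S (ζ + 1) := by
  rw [SS.S_succ]
  refine ⟨1, fun _ => A, fun i _ => hA, fun i _ => hne, ?_, ?_, ?_⟩
  · intro i j hij hj; omega
  · have himg : Finset.image (fun _ => sInf ((A : Finset ℕ) : Set ℕ)) (Finset.range 1)
        = {sInf ((A : Finset ℕ) : Set ℕ)} := by simp
    rw [himg]
    intro n hn
    rw [Finset.mem_singleton] at hn
    subst hn
    rw [Finset.card_singleton]
    exact h1 _ (Nat.sInf_mem ((Finset.coe_nonempty).2 hne))
  · simp

lemma S_seq_chain (SS : SchreierSystem) {ζ : Ordinal} (hζ : ζ < omega1)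
    (hlim : Order.IsSuccLimit ζ) (m : ℕ) :
    ∀ m', m ≤ m' → SS.S (SS.seq ζ m) ⊆ SS.S (SS.seq ζ m') := by
  intro m'
  induction m' with
  | zero =>
    intro h
    have : m = 0 := by omega
    subst this; exact subset_rfl
  | succ k IH =>
    intro h
    by_cases hm : m = k + 1
    · subst hm; exact subset_rfl
    · have h2 : m ≤ k := by omega
      exact (IH h2).trans (SS.S_seq_mono ζ hζ hlim k)

lemma S_canon (SS : SchreierSystem) {ζ : Ordinal} (hζ : ζ < omega1)
    (hlim : Order.IsSuccLimit ζ) {E : Finset ℕ} (hE : E ∈ SS.S ζ) (hne : E.Nonempty) :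
    E ∈ SS.S (SS.seq ζ (sInf (E : Set ℕ))) := by
  rw [SS.S_limit ζ hζ hlim] at hE
  obtain ⟨m, hm, hmem⟩ := hE
  exact S_seq_chain SS hζ hlim m _ (hm _ (Nat.sInf_mem ((Finset.coe_nonempty).2 hne))) hmem

lemma S_tail (SS : SchreierSystem) :
    ∀ ζ' : Ordinal, ζ' < omega1 → ∀ ζ : Ordinal, ζ ≤ ζ' →
      ∃ t : ℕ, ∀ A : Finset ℕ, A ∈ SS.S ζ → (∀ j ∈ A, t ≤ j) → A ∈ SS.S ζ' := by
  intro ζ'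
  induction ζ' using Ordinal.induction with
  | h ζ' IH =>
    intro hζ' ζ hle
    rcases eq_or_lt_of_le hle with rfl | hlt
    · exact ⟨0, fun A hA _ => hA⟩
    rcases Ordinal.zero_or_succ_or_isSuccLimit ζ' with h0 | ⟨a, ha⟩ | hlim
    · subst h0; exact absurd hlt (not_lt.2 zero_le)
    · subst ha
      have hζa : ζ ≤ a := Order.lt_succ_iff.mp hlt
      have haΩ : a < omega1 := lt_trans (Order.lt_succ a) hζ'
      obtain ⟨t₁, ht₁⟩ := IH a (Order.lt_succ a) haΩ ζ hζa
      refine ⟨max t₁ 1, fun A hA hj => ?_⟩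
      have hA' : A ∈ SS.S a := ht₁ A hA (fun j hjA => le_trans (le_max_left _ _) (hj j hjA))
      rcases Finset.eq_empty_or_nonempty A with rfl | hne
      · exact S_empty SS _ hζ'
      · rw [← Ordinal.add_one_eq_succ]
        exact S_succ_single SS hA' hne (fun j hjA => le_trans (le_max_right _ _) (hj j hjA))
    · obtain ⟨q, hq⟩ : ∃ q, ζ < SS.seq ζ' q := by
        by_contra hcon
        push_neg at hcon
        have : ζ' ≤ ζ := by
          rw [← SS.seq_iSup ζ' hζ' hlim]
          exact ciSup_le hcon
        exact absurd hlt (not_lt.mpr this)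
      have hsq := SS.seq_lt ζ' hζ' hlim q
      obtain ⟨t₁, ht₁⟩ := IH (SS.seq ζ' q) hsq (lt_trans hsq hζ') ζ hq.le
      refine ⟨max t₁ q, fun A hA hj => ?_⟩
      rw [SS.S_limit ζ' hζ' hlim]
      exact ⟨q, fun m hm => le_trans (le_max_right _ _) (hj m hm),
        ht₁ A hA (fun j hjA => le_trans (le_max_left _ _) (hj j hjA))⟩

lemma S_single (SS : SchreierSystem) {ζ : Ordinal} (hζ : ζ < omega1) :
    ∃ t : ℕ, ∀ j : ℕ, t ≤ j → {j} ∈ SS.S ζ := by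
  obtain ⟨t, ht⟩ := S_tail SS ζ hζ 0 zero_le
  refine ⟨t, fun j hj => ht {j} ?_ ?_⟩
  · rw [SS.S_zero]; exact Or.inr ⟨j, rfl⟩
  · intro m hm; rw [Finset.mem_singleton] at hm; omega

/-- The convolution lemma: a `𝓢_β`-admissible union of `𝓢_α`-sets (placed far enough to
the right, as prescribed by the function `g`) belongs to `𝓢_{α+β}`. -/
lemma S_conv (SS : SchreierSystem) :
    ∀ β : Ordinal, β < omega1 → ∀ α : Ordinal, α < omega1 →
      ∃ g : ℕ → ℕ, (∀ b, b ≤ g b) ∧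
        ∀ B : Finset ℕ, B ∈ SS.S β → ∀ Fb : ℕ → Finset ℕ,
          (∀ b ∈ B, Fb b ∈ SS.S α) → (∀ b ∈ B, (Fb b).Nonempty) →
          (∀ b ∈ B, ∀ b' ∈ B, b < b' → ∀ u ∈ Fb b, ∀ v ∈ Fb b', u < v) →
          (∀ b ∈ B, ∀ u ∈ Fb b, g b ≤ u) →
          B.biUnion Fb ∈ SS.S (α + β) := by
  intro β
  induction β using Ordinal.induction with
  | h β IH =>
    intro hβ α hα
    rcases Ordinal.zero_or_succ_or_isSuccLimit β with h0 | ⟨η, hη⟩ | hlim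
    · subst h0
      refine ⟨id, fun b => le_rfl, ?_⟩
      intro B hB Fb hF _ _ _
      rw [SS.S_zero] at hB
      rw [add_zero]
      rcases hB with rfl | ⟨n, rfl⟩
      · simpa using S_empty SS α hα
      · rw [Finset.singleton_biUnion]
        exact hF n (Finset.mem_singleton_self n)
    · subst hη
      have hηΩ : η < omega1 := lt_trans (Order.lt_succ η) hβ
      obtain ⟨g, hg_id, hg⟩ := IH η (Order.lt_succ η) hηΩ α hα
      refine ⟨g, hg_id, ?_⟩
      intro B hB Fb hF hFne hFsucc hFg
      rw [← Ordinal.add_one_eq_succ, SS.S_succ] at hB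
      obtain ⟨n, Es, hEs, hEsne, hEssucc, hEmins, hBeq⟩ := hB
      have hmemB : ∀ j, j < n → ∀ b ∈ Es j, b ∈ B := by
        intro j hj b hb
        rw [hBeq]
        exact Finset.mem_biUnion.2 ⟨j, Finset.mem_range.2 hj, hb⟩
      set Gs : ℕ → Finset ℕ := fun j => (Es j).biUnion Fb with hGs
      have hGmem : ∀ j, j < n → Gs j ∈ SS.S (α + η) := by
        intro j hj
        refine hg (Es j) (hEs j hj) Fb ?_ ?_ ?_ ?_
        · intro b hb; exact hF b (hmemB j hj b hb)
        · intro b hb; exact hFne b (hmemB j hj b hb)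
        · intro b hb b' hb' hlt; exact hFsucc b (hmemB j hj b hb) b' (hmemB j hj b' hb') hlt
        · intro b hb; exact hFg b (hmemB j hj b hb)
      have hGne : ∀ j, j < n → (Gs j).Nonempty := by
        intro j hj
        obtain ⟨b, hb⟩ := hEsne j hj
        obtain ⟨u, hu⟩ := hFne b (hmemB j hj b hb)
        exact ⟨u, Finset.mem_biUnion.2 ⟨b, hb, hu⟩⟩
      have hGsucc : ∀ i j, i < j → j < n → ∀ u ∈ Gs i, ∀ v ∈ Gs j, u < v := by
        intro i j hij hj u hu v hv
        obtain ⟨b, hb, hub⟩ := Finset.mem_biUnion.1 hu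
        obtain ⟨b', hb', hvb⟩ := Finset.mem_biUnion.1 hv
        have hbb' : b < b' := hEssucc i j hij hj b hb b' hb'
        exact hFsucc b (hmemB i (lt_trans hij hj) b hb) b' (hmemB j hj b' hb') hbb' u hub v hvb
      -- the old minima are at least `n`
      have hEInf_mem : ∀ j, j < n → sInf ((Es j : Finset ℕ) : Set ℕ) ∈ Es j := by
        intro j hj
        exact Nat.sInf_mem ((Finset.coe_nonempty).2 (hEsne j hj))
      have hinj : Set.InjOn (fun j => sInf ((Es j : Finset ℕ) : Set ℕ)) (Finset.range n) := by
        intro i hi j hj hij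
        have hij' : sInf ((Es i : Finset ℕ) : Set ℕ) = sInf ((Es j : Finset ℕ) : Set ℕ) := hij
        clear hij
        rcases lt_trichotomy i j with h | h | h
        · exfalso
          have := hEssucc i j h (Finset.mem_range.1 hj) _ (hEInf_mem i (lt_trans h (Finset.mem_range.1 hj))) _ (hEInf_mem j (Finset.mem_range.1 hj))
          omega
        · exact h
        · exfalso
          have := hEssucc j i h (Finset.mem_range.1 hi) _ (hEInf_mem j (lt_trans h (Finset.mem_range.1 hi))) _ (hEInf_mem i (Finset.mem_range.1 hi))
          omega
      have hcard : (Finset.image (fun i => sInf ((Es i : Finset ℕ) : Set ℕ)) (Finset.range n)).card = n := by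
        rw [Finset.card_image_of_injOn hinj, Finset.card_range]
      have hn_le : ∀ j, j < n → n ≤ sInf ((Es j : Finset ℕ) : Set ℕ) := by
        intro j hj
        have hmem : sInf ((Es j : Finset ℕ) : Set ℕ) ∈
            Finset.image (fun i => sInf ((Es i : Finset ℕ) : Set ℕ)) (Finset.range n) :=
          Finset.mem_image.2 ⟨j, Finset.mem_range.2 hj, rfl⟩
        have := hEmins _ hmem
        omega
      -- assemble
      rw [hBeq, Finset.biUnion_biUnion]
      have hβeq : α + Order.succ η = (α + η) + 1 := by
        rw [Ordinal.add_succ, Ordinal.add_one_eq_succ]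
      rw [hβeq, SS.S_succ]
      refine ⟨n, Gs, hGmem, hGne, hGsucc, ?_, rfl⟩
      intro m hm
      obtain ⟨j, hj, hjm⟩ := Finset.mem_image.1 hm
      rw [Finset.mem_range] at hj
      have h1 : (Finset.image (fun j => sInf ((Gs j : Finset ℕ) : Set ℕ)) (Finset.range n)).card ≤ n := by
        calc (Finset.image _ (Finset.range n)).card ≤ (Finset.range n).card :=
              Finset.card_image_le
          _ = n := Finset.card_range _
      have h2 : n ≤ m := by
        subst hjm
        have hGjmem : sInf ((Gs j : Finset ℕ) : Set ℕ) ∈ Gs j :=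
          Nat.sInf_mem ((Finset.coe_nonempty).2 (hGne j hj))
        obtain ⟨b, hb, hub⟩ := Finset.mem_biUnion.1 hGjmem
        calc n ≤ sInf ((Es j : Finset ℕ) : Set ℕ) := hn_le j hj
          _ ≤ b := Nat.sInf_le hb
          _ ≤ g b := hg_id b
          _ ≤ _ := hFg b (hmemB j hj b hb) _ hub
      omega
    · -- limit case
      have hseqlt : ∀ q, SS.seq β q < β := SS.seq_lt β hβ hlim
      have hseqΩ : ∀ q, SS.seq β q < omega1 := fun q => lt_trans (hseqlt q) hβ
      choose gq hgq_id hgq using fun q => IH (SS.seq β q) (hseqlt q) (hseqΩ q) α hα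
      have hαβΩ : α + β < omega1 := aux_add_lt_omega1 hα hβ
      choose tq htq using fun q : ℕ =>
        S_tail SS (α + β) hαβΩ (α + SS.seq β q) (add_le_add_right (hseqlt q).le α)
      refine ⟨fun b => max b ((Finset.range (b + 1)).sup fun q => max (gq q b) (tq q)),
        fun b => le_max_left _ _, ?_⟩
      intro B hB Fb hF hFne hFsucc hFg
      rcases Finset.eq_empty_or_nonempty B with rfl | hBne
      · simpa using S_empty SS _ hαβΩ
      set q0 := sInf ((B : Finset ℕ) : Set ℕ) with hq0
      have hq0B : q0 ∈ B := Nat.sInf_mem ((Finset.coe_nonempty).2 hBne)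
      have hBq0 : B ∈ SS.S (SS.seq β q0) := S_canon SS hβ hlim hB hBne
      have hkey : ∀ b ∈ B, ∀ u ∈ Fb b, max (gq q0 b) (tq q0) ≤ u := by
        intro b hb u hu
        have h1 : q0 ≤ b := Nat.sInf_le hb
        have h2 : q0 ∈ Finset.range (b + 1) := Finset.mem_range.2 (by omega)
        calc max (gq q0 b) (tq q0)
            ≤ (Finset.range (b + 1)).sup fun q => max (gq q b) (tq q) :=
              Finset.le_sup (f := fun q => max (gq q b) (tq q)) h2
          _ ≤ max b ((Finset.range (b + 1)).sup fun q => max (gq q b) (tq q)) :=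
              le_max_right _ _
          _ ≤ u := hFg b hb u hu
      have hU : B.biUnion Fb ∈ SS.S (α + SS.seq β q0) := by
        refine hgq q0 B hBq0 Fb hF hFne hFsucc ?_
        intro b hb u hu
        exact le_trans (le_max_left _ _) (hkey b hb u hu)
      refine htq q0 _ hU ?_
      intro j hj
      obtain ⟨b, hb, hjb⟩ := Finset.mem_biUnion.1 hj
      exact le_trans (le_max_right _ _) (hkey b hb j hjb)

/-! ### Analytic helpers -/

/-- Recursive choice of a sequence, where each term is chosen subject to a "floor"
computed from the previous term. -/
lemma exists_chain {α : Type*} (init : ℕ) (step : α → ℕ) (P : ℕ → ℕ → α → Prop)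
    (h : ∀ n T, ∃ a, P n T a) :
    ∃ f : ℕ → α, P 0 init (f 0) ∧ ∀ n, P (n + 1) (step (f n)) (f (n + 1)) := by
  choose F hF using h
  refine ⟨fun n => Nat.rec (F 0 init) (fun k ih => F (k + 1) (step ih)) n, hF 0 init, ?_⟩
  intro n
  exact hF (n + 1) _

lemma seminorm_sum_le {X : Type*} [AddCommGroup X] [Module ℝ X] {N : X → ℝ}
    (hadd : ∀ u v : X, N (u + v) ≤ N u + N v)
    (hhom : ∀ (a : ℝ) (u : X), N (a • u) = |a| * N u) :
    ∀ (s : Finset ℕ) (f : ℕ → ℝ) (v : ℕ → X),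
      N (∑ i ∈ s, f i • v i) ≤ ∑ i ∈ s, |f i| * N (v i) := by
  have hN0 : N 0 = 0 := by
    have := hhom 0 0
    simpa using this
  intro s f v
  induction s using Finset.cons_induction with
  | empty => simp [hN0]
  | cons a s ha IH =>
    rw [Finset.sum_cons, Finset.sum_cons]
    calc N (f a • v a + ∑ i ∈ s, f i • v i)
        ≤ N (f a • v a) + N (∑ i ∈ s, f i • v i) := hadd _ _
      _ ≤ |f a| * N (v a) + ∑ i ∈ s, |f i| * N (v i) := by
          rw [hhom]
          exact add_le_add_right IH _

/-- Identification of the first Schreier family. -/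
lemma S_one (SS : SchreierSystem) : SS.S 1 = schreierOne := by
  have h1 : (1 : Ordinal) = 0 + 1 := (zero_add 1).symm
  rw [h1, SS.S_succ]
  ext E
  constructor
  · rintro ⟨n, Es, hEs, hEsne, hsucc, hmins, rfl⟩
    have hEssInf : ∀ i, i < n → Es i = {sInf ((Es i : Finset ℕ) : Set ℕ)} := by
      intro i hi
      have h := hEs i hi
      rw [SS.S_zero] at h
      rcases h with h | ⟨k, hk⟩
      · exact absurd (hEsne i hi) (by rw [h]; simp)
      · rw [hk]
        congr 1
        rw [Finset.coe_singleton, csInf_singleton]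
    have hbi : (Finset.range n).biUnion Es
        = Finset.image (fun i => sInf ((Es i : Finset ℕ) : Set ℕ)) (Finset.range n) := by
      ext j
      simp only [Finset.mem_biUnion, Finset.mem_image, Finset.mem_range]
      constructor
      · rintro ⟨i, hi, hj⟩
        refine ⟨i, hi, ?_⟩
        rw [hEssInf i hi, Finset.mem_singleton] at hj
        exact hj.symm
      · rintro ⟨i, hi, rfl⟩
        exact ⟨i, hi, Nat.sInf_mem ((Finset.coe_nonempty).2 (hEsne i hi))⟩
    rw [hbi]
    exact hmins
  · intro hE
    rcases Finset.eq_empty_or_nonempty E with rfl | hne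
    · refine ⟨0, fun _ => ∅, ?_, ?_, ?_, ?_, ?_⟩
      · intro i hi; omega
      · intro i hi; omega
      · intro i j hij hj; omega
      · simp only [Finset.range_zero, Finset.image_empty]
        intro m hm; simp at hm
      · simp
    · set e : ℕ → ℕ := fun i => if h : i < E.card then E.orderEmbOfFin rfl ⟨i, h⟩ else 0
        with he
      refine ⟨E.card, fun i => {e i}, ?_, ?_, ?_, ?_, ?_⟩
      · intro i _
        rw [SS.S_zero]
        exact Or.inr ⟨e i, rfl⟩
      · intro i _
        exact Finset.singleton_nonempty _
      · intro i j hij hj a ha b hb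
        rw [Finset.mem_singleton] at ha hb
        subst ha; subst hb
        simp only [he]
        rw [dif_pos (lt_trans hij hj), dif_pos hj]
        exact (E.orderEmbOfFin rfl).strictMono (by exact hij)
      · have himg : Finset.image (fun i => sInf ((({e i} : Finset ℕ) : Set ℕ)))
            (Finset.range E.card) = Finset.image e (Finset.range E.card) := by
          refine Finset.image_congr ?_
          intro i _
          show sInf ((({e i} : Finset ℕ) : Set ℕ)) = e i
          rw [Finset.coe_singleton, csInf_singleton]
        rw [himg]
        have himg2 : Finset.image e (Finset.range E.card) = E := by
          apply Finset.eq_of_subset_of_card_le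
          · intro j hj
            obtain ⟨i, hi, rfl⟩ := Finset.mem_image.1 hj
            rw [Finset.mem_range] at hi
            simp only [he]
            rw [dif_pos hi]
            exact E.orderEmbOfFin_mem rfl ⟨i, hi⟩
          · have hinj : Set.InjOn e (Finset.range E.card) := by
              intro i hi j hj hij
              rw [Finset.coe_range, Set.mem_Iio] at hi hj
              simp only [he] at hij
              rw [dif_pos hi, dif_pos hj] at hij
              have h2 := (E.orderEmbOfFin rfl).injective hij
              have h3 := congrArg Fin.val h2
              simpa using h3
            rw [Finset.card_image_of_injOn hinj, Finset.card_range]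
        rw [himg2]
        exact hE
      · ext j
        simp only [Finset.mem_biUnion, Finset.mem_range, Finset.mem_singleton]
        constructor
        · intro hj
          have : j ∈ Finset.image e (Finset.range E.card) := by
            apply Finset.mem_image.2
            -- j = e i for some i
            obtain ⟨i, hord⟩ : ∃ i : Fin E.card, E.orderEmbOfFin rfl i = j := by
              have := (E.range_orderEmbOfFin rfl)
              have hj' : j ∈ Set.range (E.orderEmbOfFin rfl) := by
                rw [this]; exact_mod_cast hj
              obtain ⟨i, hi⟩ := hj'
              exact ⟨i, hi⟩
            exact ⟨i.val, Finset.mem_range.2 i.isLt, by simp only [he]; rw [dif_pos i.isLt]; simpa using hord⟩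
          obtain ⟨i, hi, hij⟩ := Finset.mem_image.1 this
          exact ⟨i, Finset.mem_range.1 hi, hij.symm⟩
        · rintro ⟨i, hi, rfl⟩
          simp only [he]
          rw [dif_pos hi]
          exact E.orderEmbOfFin_mem rfl ⟨i, hi⟩

/-! ### The abstract James-type non-distortion argument -/

lemma main_abstract {X : Type*} [NormedAddCommGroup X] [NormedSpace ℝ X]
    (x : ℕ → X) (F : Set (Finset ℕ)) (CC : ℝ)
    (hx : IsL1SMWrt (fun v => ‖v‖) F CC x)
    (N : X → ℝ) (hN : IsEquivNorm N) (ε : ℝ) (hε : 0 < ε)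
    (ι : Type*) (hι : Nonempty ι) (G : ι → Set (Finset ℕ))
    (hA2 : ∀ i, ∃ t : ℕ, ∀ A : Finset ℕ, A ∈ G i → (∀ j ∈ A, t ≤ j) → A ∈ F)
    (hA3 : ∀ i, ∃ t : ℕ, ∀ j : ℕ, t ≤ j → ({j} : Finset ℕ) ∈ G i)
    (hA5 : ∀ i, ∃ (ρ : ℕ → ι) (g : ℕ → ℕ),
      ∀ E : Finset ℕ, E ∈ F → E.Nonempty → ∀ Fb : ℕ → Finset ℕ,
        (∀ b ∈ E, Fb b ∈ G i) → (∀ b ∈ E, (Fb b).Nonempty) →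
        (∀ b ∈ E, ∀ b' ∈ E, b < b' → ∀ u ∈ Fb b, ∀ v ∈ Fb b', u < v) →
        (∀ b ∈ E, ∀ u ∈ Fb b, g b ≤ u) →
        E.biUnion Fb ∈ G (ρ (sInf ((E : Finset ℕ) : Set ℕ))) ∧ E.biUnion Fb ∈ F) :
    ∃ (y : ℕ → X) (E : ℕ → Finset ℕ) (a : ℕ → ℝ) (lam : ℝ), 0 < lam ∧
      IsBlockingOf x y E a ∧ IsL1SMWrt N F (1 + ε) y ∧
      IsL1SMWrt (fun v => ‖v‖) F CC (fun n => lam • y n) := by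
  classical
  haveI := hι
  obtain ⟨⟨hxnz, Kx, hKx, hxbasic⟩, cx, Cx, hcx, hCx, hprod, hxest⟩ := hx
  obtain ⟨hNadd, hNhom, cN, CN, hcN, hCN, hNeq⟩ := hN
  have hN0 : N 0 = 0 := by have := hNhom 0 0; simpa using this
  have hNnonneg : ∀ v, 0 ≤ N v :=
    fun v => le_trans (mul_nonneg hcN.le (norm_nonneg v)) (hNeq v).1
  choose t2 ht2 using hA2
  choose t3 ht3 using hA3
  -- the sets of values of the equivalent norm on normalized vectors of grade `i`,
  -- supported beyond `m`
  set Sσ : ι → ℕ → Set ℝ := fun i m =>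
    {r | ∃ (b : ℕ → ℝ) (A : Finset ℕ), A ∈ G i ∧ (∑ j ∈ A, |b j|) = 1 ∧
      (∀ j ∈ A, m ≤ j) ∧ r = N (∑ j ∈ A, b j • x j)} with hSσ
  have hSne : ∀ i m, (Sσ i m).Nonempty := by
    intro i m
    refine ⟨N (∑ j ∈ ({max m (max (t3 i) (t2 i))} : Finset ℕ), (1 : ℝ) • x j),
      fun _ => (1 : ℝ), {max m (max (t3 i) (t2 i))}, ?_, by simp, ?_, rfl⟩
    · exact ht3 i _ (by omega)
    · intro j hj; rw [Finset.mem_singleton] at hj; omega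
  have hSbdd : ∀ i m, BddBelow (Sσ i m) := by
    intro i m
    refine ⟨0, fun r hr => ?_⟩
    obtain ⟨b, A, _, _, _, rfl⟩ := hr
    exact hNnonneg _
  set σ : ι → ℕ → ℝ := fun i m => sInf (Sσ i m) with hσ
  -- upper bound on σ
  have hσub : ∀ i m, σ i m ≤ CN * Cx := by
    intro i m
    set j := max m (max (t3 i) (t2 i)) with hj
    have hjF : ({j} : Finset ℕ) ∈ F := by
      refine ht2 i _ (ht3 i _ (by omega)) ?_
      intro u hu; rw [Finset.mem_singleton] at hu; omega
    have hmem : N (∑ u ∈ ({j} : Finset ℕ), (1 : ℝ) • x u) ∈ Sσ i m := by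
      refine ⟨fun _ => (1 : ℝ), {j}, ht3 i _ (by omega), by simp, ?_, rfl⟩
      intro u hu; rw [Finset.mem_singleton] at hu; omega
    have hval : N (∑ u ∈ ({j} : Finset ℕ), (1 : ℝ) • x u) ≤ CN * Cx := by
      have h1 := (hxest {j} hjF (fun _ => (1 : ℝ))).2
      simp only [Finset.sum_singleton, one_smul, abs_one] at h1 ⊢
      calc N (x j) ≤ CN * ‖x j‖ := (hNeq (x j)).2
        _ ≤ CN * (Cx * 1) := by
            apply mul_le_mul_of_nonneg_left _ hCN.le
            simpa using h1
        _ = CN * Cx := by ring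
    exact le_trans (csInf_le (hSbdd i m) hmem) hval
  -- lower bound on σ beyond the tail
  have hσlb : ∀ i m, t2 i ≤ m → cN * cx⁻¹ ≤ σ i m := by
    intro i m hm
    refine le_csInf (hSne i m) ?_
    rintro r ⟨b, A, hAG, hmass, hmin, rfl⟩
    have hAF : A ∈ F := ht2 i A hAG (fun j hj => le_trans hm (hmin j hj))
    have h1 := (hxest A hAF b).1
    rw [hmass, mul_one] at h1
    calc cN * cx⁻¹ ≤ cN * ‖∑ j ∈ A, b j • x j‖ :=
          mul_le_mul_of_nonneg_left h1 hcN.le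
      _ ≤ N (∑ j ∈ A, b j • x j) := (hNeq _).1
  set τ : ι → ℝ := fun i => ⨆ m, σ i m with hτ
  have hτbddA : ∀ i, BddAbove (Set.range fun m => σ i m) := by
    intro i
    exact ⟨CN * Cx, by rintro r ⟨m, rfl⟩; exact hσub i m⟩
  have hτlb : ∀ i, cN * cx⁻¹ ≤ τ i := by
    intro i
    exact le_trans (hσlb i (t2 i) le_rfl) (le_ciSup (hτbddA i) (t2 i))
  set τs : ℝ := ⨅ i, τ i with hτs
  have hτsbdd : BddBelow (Set.range τ) :=
    ⟨cN * cx⁻¹, by rintro r ⟨i, rfl⟩; exact hτlb i⟩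
  have hτspos : 0 < τs :=
    lt_of_lt_of_le (mul_pos hcN (inv_pos.2 hcx)) (le_ciInf hτlb)
  have hτsle : ∀ i, τs ≤ τ i := fun i => ciInf_le hτsbdd i
  -- the quantitative parameters
  set ε1 : ℝ := min ε 1 / 8 with hε1def
  have hε1pos : 0 < ε1 := by
    have := lt_min hε zero_lt_one
    simp only [hε1def]
    linarith
  have hε1ε : 8 * ε1 ≤ ε := by
    have := min_le_left ε 1
    simp only [hε1def]; linarith
  have hε1one : 8 * ε1 ≤ 1 := by
    have := min_le_right ε 1
    simp only [hε1def]; linarith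
  -- choose a nearly optimal grade
  obtain ⟨istar, histar⟩ : ∃ i, τ i < τs * (1 + ε1) := by
    apply exists_lt_of_ciInf_lt
    rw [← hτs]
    nlinarith
  -- per-grade tails where σ is nearly τs
  have hMex : ∀ i, ∃ m, τs * (1 - ε1) < σ i m := by
    intro i
    apply exists_lt_of_lt_ciSup
    calc τs * (1 - ε1) < τs := by nlinarith
      _ ≤ τ i := hτsle i
  choose Mf hMf using hMex
  obtain ⟨ρ, gA, hA5i⟩ := hA5 istar
  -- static part of the positional constraints
  set Tst : ℕ → ℕ := fun n =>
    max (n + 1) (max (gA n) (max (t2 istar) ((Finset.range (n + 1)).sup fun q => Mf (ρ q))))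
    with hTst
  -- existence of near-optimal blocks
  have hblock : ∀ (n T : ℕ), ∃ p : (ℕ → ℝ) × Finset ℕ,
      p.2 ∈ G istar ∧ (∑ j ∈ p.2, |p.1 j|) = 1 ∧
      (∀ j ∈ p.2, max T (Tst n) ≤ j) ∧
      N (∑ j ∈ p.2, p.1 j • x j) < τs * (1 + ε1) ^ 2 ∧ p.2.Nonempty := by
    intro n T
    have h1 : σ istar (max T (Tst n)) < τs * (1 + ε1) ^ 2 := by
      have h2 : σ istar (max T (Tst n)) ≤ τ istar := le_ciSup (hτbddA istar) _
      have h3 : τs * (1 + ε1) < τs * (1 + ε1) ^ 2 := by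
        have hp : 0 < τs * (1 + ε1) := mul_pos hτspos (by linarith)
        calc τs * (1 + ε1) = τs * (1 + ε1) * 1 := by ring
          _ < τs * (1 + ε1) * (1 + ε1) := by
              exact mul_lt_mul_of_pos_left (by linarith) hp
          _ = τs * (1 + ε1) ^ 2 := by ring
      linarith
    obtain ⟨r, hr, hrlt⟩ := exists_lt_of_csInf_lt (hSne istar _) h1
    obtain ⟨b, A, hAG, hmass, hmin, rfl⟩ := hr
    have hAne : A.Nonempty := by
      by_contra h
      rw [Finset.not_nonempty_iff_eq_empty] at h
      subst h
      simp at hmass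
    exact ⟨(b, A), hAG, hmass, hmin, hrlt, hAne⟩
  obtain ⟨blocks, hb0, hbS⟩ := exists_chain 0 (fun p => (p.2.sup id) + 1)
    (fun n T (p : (ℕ → ℝ) × Finset ℕ) => p.2 ∈ G istar ∧ (∑ j ∈ p.2, |p.1 j|) = 1 ∧
      (∀ j ∈ p.2, max T (Tst n) ≤ j) ∧
      N (∑ j ∈ p.2, p.1 j • x j) < τs * (1 + ε1) ^ 2 ∧ p.2.Nonempty) hblock
  set A : ℕ → Finset ℕ := fun n => (blocks n).2 with hA
  set bc : ℕ → ℕ → ℝ := fun n => (blocks n).1 with hbc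
  have hBG : ∀ n, A n ∈ G istar := by
    intro n; cases n with
    | zero => exact hb0.1
    | succ k => exact (hbS k).1
  have hBmass : ∀ n, (∑ j ∈ A n, |bc n j|) = 1 := by
    intro n; cases n with
    | zero => exact hb0.2.1
    | succ k => exact (hbS k).2.1
  have hBpos : ∀ n, ∀ j ∈ A n, Tst n ≤ j := by
    intro n; cases n with
    | zero => exact fun j hj => le_trans (le_max_right _ _) (hb0.2.2.1 j hj)
    | succ k => exact fun j hj => le_trans (le_max_right _ _) ((hbS k).2.2.1 j hj)
  have hBN : ∀ n, N (∑ j ∈ A n, bc n j • x j) < τs * (1 + ε1) ^ 2 := by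
    intro n; cases n with
    | zero => exact hb0.2.2.2.1
    | succ k => exact (hbS k).2.2.2.1
  have hBne : ∀ n, (A n).Nonempty := by
    intro n; cases n with
    | zero => exact hb0.2.2.2.2
    | succ k => exact (hbS k).2.2.2.2
  have hBfloor : ∀ k, ∀ j ∈ A (k + 1), (A k).sup id + 1 ≤ j :=
    fun k j hj => le_trans (le_max_left _ _) ((hbS k).2.2.1 j hj)
  -- successiveness
  have hsucc : ∀ m n, m < n → ∀ i ∈ A m, ∀ j ∈ A n, i < j := by
    intro m n
    induction n with
    | zero => omega
    | succ k IH =>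
      intro hmn i hi j hj
      have hjf := hBfloor k j hj
      by_cases hmk : m = k
      · subst hmk
        have : (id i : ℕ) ≤ (A m).sup id := Finset.le_sup hi
        simp only [id] at this
        omega
      · have hmk' : m < k := by omega
        obtain ⟨w, hw⟩ := hBne k
        have h1 : i < w := IH hmk' i hi w hw
        have h2 : (id w : ℕ) ≤ (A k).sup id := Finset.le_sup hw
        simp only [id] at h2
        omega
  have hdisj : ∀ {j m n}, j ∈ A m → j ∈ A n → m = n := by
    intro j m n hm hn
    rcases lt_trichotomy m n with h | h | h
    · exact absurd (hsucc m n h j hm j hn) (lt_irrefl j)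
    · exact h
    · exact absurd (hsucc n m h j hn j hm) (lt_irrefl j)
  have hA_ub : ∀ n, ∀ j ∈ A n, n < j := by
    intro n j hj
    have := hBpos n j hj
    simp only [hTst] at this
    omega
  -- the blocking
  set y : ℕ → X := fun n => ∑ j ∈ A n, bc n j • x j with hy
  set aglob : ℕ → ℝ := fun j => ∑ n ∈ Finset.range (j + 1), if j ∈ A n then bc n j else 0
    with haglob
  have haglob_eq : ∀ n, ∀ j ∈ A n, aglob j = bc n j := by
    intro n j hj
    simp only [haglob]
    have hn : n ∈ Finset.range (j + 1) := Finset.mem_range.2 (by have := hA_ub n j hj; omega)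
    rw [Finset.sum_eq_single_of_mem n hn]
    · rw [if_pos hj]
    · intro m _ hmn
      rw [if_neg (fun hjm => hmn (hdisj hjm hj))]
  -- combined coefficients of a combination of blocks
  set cglob : (ℕ → ℝ) → ℕ → ℝ := fun α j =>
    ∑ n ∈ Finset.range (j + 1), if j ∈ A n then α n * bc n j else 0 with hcglob
  have hcglob_eq : ∀ (α : ℕ → ℝ) (n : ℕ), ∀ j ∈ A n, cglob α j = α n * bc n j := by
    intro α n j hj
    simp only [hcglob]
    have hn : n ∈ Finset.range (j + 1) := Finset.mem_range.2 (by have := hA_ub n j hj; omega)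
    rw [Finset.sum_eq_single_of_mem n hn]
    · rw [if_pos hj]
    · intro m _ hmn
      rw [if_neg (fun hjm => hmn (hdisj hjm hj))]
  have hpdisj : ∀ T : Finset ℕ, ((T : Finset ℕ) : Set ℕ).PairwiseDisjoint A := by
    intro T m _ n _ hmn
    apply Finset.disjoint_left.2
    intro j hjm hjn
    exact hmn (hdisj hjm hjn)
  have hrw : ∀ (T : Finset ℕ) (α : ℕ → ℝ),
      ∑ n ∈ T, α n • y n = ∑ j ∈ T.biUnion A, cglob α j • x j := by
    intro T α
    rw [Finset.sum_biUnion (hpdisj T)]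
    refine Finset.sum_congr rfl ?_
    intro n _
    have hinner : ∀ j ∈ A n, cglob α j • x j = α n • (bc n j • x j) := by
      intro j hj
      rw [hcglob_eq α n j hj, mul_smul]
    rw [Finset.sum_congr rfl hinner, ← Finset.smul_sum]
  have hrwmass : ∀ (T : Finset ℕ) (α : ℕ → ℝ),
      ∑ j ∈ T.biUnion A, |cglob α j| = ∑ n ∈ T, |α n| := by
    intro T α
    rw [Finset.sum_biUnion (hpdisj T)]
    refine Finset.sum_congr rfl ?_
    intro n _
    calc ∑ j ∈ A n, |cglob α j| = ∑ j ∈ A n, |α n| * |bc n j| := by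
          refine Finset.sum_congr rfl ?_
          intro j hj
          rw [hcglob_eq α n j hj, abs_mul]
      _ = |α n| * ∑ j ∈ A n, |bc n j| := by rw [Finset.mul_sum]
      _ = |α n| := by rw [hBmass n, mul_one]
  -- partial sums at block boundaries
  set Bnd : ℕ → ℕ := fun m => (Finset.range m).sup (fun i => (A i).sup id + 1) with hBnd
  have hBndmono : ∀ {m n : ℕ}, m ≤ n → Bnd m ≤ Bnd n := by
    intro m n h
    exact Finset.sup_mono (Finset.range_subset_range.2 h)
  have hsub : ∀ m, (Finset.range m).biUnion A ⊆ Finset.range (Bnd m) := by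
    intro m j hj
    obtain ⟨i, hi, hji⟩ := Finset.mem_biUnion.1 hj
    rw [Finset.mem_range]
    have h1 : (id j : ℕ) ≤ (A i).sup id := Finset.le_sup hji
    have h2 : (A i).sup id + 1 ≤ Bnd m := Finset.le_sup (f := fun i => (A i).sup id + 1) hi
    simp only [id] at h1
    omega
  have hczero : ∀ (α : ℕ → ℝ) (m : ℕ), ∀ j ∈ Finset.range (Bnd m),
      j ∉ (Finset.range m).biUnion A → cglob α j = 0 := by
    intro α m j hjr hjn
    simp only [hcglob]
    apply Finset.sum_eq_zero
    intro n _
    rw [if_neg]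
    intro hjA
    by_cases hnm : n < m
    · exact hjn (Finset.mem_biUnion.2 ⟨n, Finset.mem_range.2 hnm, hjA⟩)
    · push_neg at hnm
      rw [Finset.mem_range] at hjr
      have hall : ∀ i, i < m → (A i).sup id + 1 ≤ j := by
        intro i him
        have hin : i < n := lt_of_lt_of_le him hnm
        obtain ⟨w0, hw0⟩ := hBne i
        have hw0j : w0 < j := hsucc i n hin w0 hw0 j hjA
        have hsup : (A i).sup id ≤ j - 1 := by
          apply Finset.sup_le
          intro w hw
          have := hsucc i n hin w hw j hjA
          simp only [id]
          omega
        omega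
      have : Bnd m ≤ j := by
        apply Finset.sup_le
        intro i hi
        exact hall i (Finset.mem_range.1 hi)
      omega
  have hrwrange : ∀ (α : ℕ → ℝ) (m : ℕ),
      ∑ n ∈ Finset.range m, α n • y n = ∑ j ∈ Finset.range (Bnd m), cglob α j • x j := by
    intro α m
    rw [hrw (Finset.range m) α]
    refine Finset.sum_subset (hsub m) ?_
    intro j hjr hjn
    rw [hczero α m j hjr hjn, zero_smul]
  -- the blocks are members of the family F, and norm bounds for single blocks
  have hyF : ∀ n, A n ∈ F := by
    intro n
    refine ht2 istar (A n) (hBG n) ?_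
    intro j hj
    have := hBpos n j hj
    simp only [hTst] at this
    omega
  have hynorm_lb : ∀ n, cx⁻¹ ≤ ‖y n‖ := by
    intro n
    have h1 := (hxest (A n) (hyF n) (bc n)).1
    rw [hBmass n, mul_one] at h1
    exact h1
  have hynorm_ub : ∀ n, ‖y n‖ ≤ Cx := by
    intro n
    have h1 := (hxest (A n) (hyF n) (bc n)).2
    rw [hBmass n, mul_one] at h1
    exact h1
  have hynz : ∀ n, y n ≠ 0 := by
    intro n h
    have h1 := hynorm_lb n
    rw [h, norm_zero] at h1
    exact absurd h1 (not_le.2 (inv_pos.2 hcx))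
  have hyN_ub : ∀ n, N (y n) < τs * (1 + ε1) ^ 2 := fun n => hBN n
  -- basic sequence property transfers to the blocking
  have hybasicN : ∀ (α : ℕ → ℝ) (m n : ℕ), m ≤ n →
      N (∑ i ∈ Finset.range m, α i • y i) ≤
        (CN * Kx / cN) * N (∑ i ∈ Finset.range n, α i • y i) := by
    intro α m n hmn
    rw [hrwrange α m, hrwrange α n]
    have h1 := (hNeq (∑ j ∈ Finset.range (Bnd m), cglob α j • x j)).2
    have h2 := hxbasic (cglob α) (Bnd m) (Bnd n) (hBndmono hmn)
    have h3 := (hNeq (∑ j ∈ Finset.range (Bnd n), cglob α j • x j)).1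
    calc N (∑ j ∈ Finset.range (Bnd m), cglob α j • x j)
        ≤ CN * ‖∑ j ∈ Finset.range (Bnd m), cglob α j • x j‖ := h1
      _ ≤ CN * (Kx * ‖∑ j ∈ Finset.range (Bnd n), cglob α j • x j‖) :=
          mul_le_mul_of_nonneg_left h2 hCN.le
      _ = (CN * Kx) * ‖∑ j ∈ Finset.range (Bnd n), cglob α j • x j‖ := by ring
      _ ≤ (CN * Kx) * (N (∑ j ∈ Finset.range (Bnd n), cglob α j • x j) / cN) := by
          apply mul_le_mul_of_nonneg_left _ (by positivity)
          rw [le_div_iff₀ hcN]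
          linarith
      _ = (CN * Kx / cN) * N (∑ j ∈ Finset.range (Bnd n), cglob α j • x j) := by ring
  have hybasicX : ∀ (α : ℕ → ℝ) (m n : ℕ), m ≤ n →
      ‖∑ i ∈ Finset.range m, α i • y i‖ ≤ Kx * ‖∑ i ∈ Finset.range n, α i • y i‖ := by
    intro α m n hmn
    rw [hrwrange α m, hrwrange α n]
    exact hxbasic (cglob α) (Bnd m) (Bnd n) (hBndmono hmn)
  -- the constants for the equivalent norm
  set c1 : ℝ := (τs * (1 - ε1))⁻¹ with hc1
  set C1 : ℝ := τs * (1 + ε1) ^ 2 with hC1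
  have h1me : (0 : ℝ) < 1 - ε1 := by linarith
  have hc1pos : 0 < c1 := by
    rw [hc1]
    exact inv_pos.2 (mul_pos hτspos h1me)
  have hC1pos : 0 < C1 := by
    rw [hC1]
    positivity
  have hprodi : c1 * C1 ≤ 1 + ε := by
    have hkey : (1 + ε1) ^ 2 ≤ (1 + ε) * (1 - ε1) := by
      nlinarith [mul_le_mul_of_nonneg_left hε1one hε.le, hε1pos.le, hε.le]
    have hA : C1 ≤ (1 + ε) * (τs * (1 - ε1)) := by
      rw [hC1]
      nlinarith [mul_le_mul_of_nonneg_left hkey hτspos.le]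
    have hpos : (0 : ℝ) < τs * (1 - ε1) := mul_pos hτspos h1me
    calc c1 * C1 ≤ c1 * ((1 + ε) * (τs * (1 - ε1))) :=
          mul_le_mul_of_nonneg_left hA hc1pos.le
      _ = (1 + ε) * ((τs * (1 - ε1))⁻¹ * (τs * (1 - ε1))) := by rw [hc1]; ring
      _ = 1 + ε := by rw [inv_mul_cancel₀ (ne_of_gt hpos), mul_one]
  -- the union of blocks over an admissible set
  have hUnion : ∀ E : Finset ℕ, E ∈ F → E.Nonempty →
      E.biUnion A ∈ G (ρ (sInf ((E : Finset ℕ) : Set ℕ))) ∧ E.biUnion A ∈ F := by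
    intro E hEF hEne
    refine hA5i E hEF hEne A (fun b _ => hBG b) (fun b _ => hBne b)
      (fun b _ b' _ h => hsucc b b' h) ?_
    intro b _ u hu
    have := hBpos b u hu
    simp only [hTst] at this
    omega
  -- the two crucial estimates for the equivalent norm
  have hest_upper : ∀ (E : Finset ℕ) (α : ℕ → ℝ),
      N (∑ n ∈ E, α n • y n) ≤ C1 * ∑ n ∈ E, |α n| := by
    intro E α
    calc N (∑ n ∈ E, α n • y n) ≤ ∑ n ∈ E, |α n| * N (y n) :=
          seminorm_sum_le hNadd hNhom E α y
      _ ≤ ∑ n ∈ E, |α n| * C1 := by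
          refine Finset.sum_le_sum ?_
          intro n _
          exact mul_le_mul_of_nonneg_left (hyN_ub n).le (abs_nonneg _)
      _ = C1 * ∑ n ∈ E, |α n| := by rw [← Finset.sum_mul]; ring
  have hest_lower : ∀ (E : Finset ℕ), E ∈ F → ∀ α : ℕ → ℝ,
      c1⁻¹ * (∑ n ∈ E, |α n|) ≤ N (∑ n ∈ E, α n • y n) := by
    intro E hEF α
    set tot : ℝ := ∑ n ∈ E, |α n| with htot
    have htotnn : 0 ≤ tot := Finset.sum_nonneg (fun n _ => abs_nonneg _)
    rcases eq_or_lt_of_le htotnn with h0 | hpos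
    · -- total mass zero
      have hz : ∀ n ∈ E, α n = 0 := by
        intro n hn
        have := (Finset.sum_eq_zero_iff_of_nonneg (fun m _ => abs_nonneg (α m))).1 h0.symm n hn
        exact abs_eq_zero.1 this
      have hzero : ∑ n ∈ E, α n • y n = 0 := by
        apply Finset.sum_eq_zero
        intro n hn
        rw [hz n hn, zero_smul]
      rw [hzero, ← h0, hN0, mul_zero]
    · have hEne : E.Nonempty := by
        rcases Finset.eq_empty_or_nonempty E with rfl | h
        · rw [htot] at hpos; simp at hpos
        · exact h
      set n0 := sInf ((E : Finset ℕ) : Set ℕ) with hn0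
      have hn0E : n0 ∈ E := Nat.sInf_mem ((Finset.coe_nonempty).2 hEne)
      obtain ⟨hUG, _⟩ := hUnion E hEF hEne
      -- the normalized combined vector is a competitor of grade ρ n0
      set b' : ℕ → ℝ := fun j => tot⁻¹ * cglob α j with hb'
      have hmass' : (∑ j ∈ E.biUnion A, |b' j|) = 1 := by
        simp only [hb']
        calc ∑ j ∈ E.biUnion A, |tot⁻¹ * cglob α j|
            = ∑ j ∈ E.biUnion A, tot⁻¹ * |cglob α j| := by
              refine Finset.sum_congr rfl ?_
              intro j _
              rw [abs_mul, abs_of_pos (inv_pos.2 hpos)]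
          _ = tot⁻¹ * ∑ j ∈ E.biUnion A, |cglob α j| := by rw [Finset.mul_sum]
          _ = tot⁻¹ * tot := by rw [hrwmass E α]
          _ = 1 := inv_mul_cancel₀ (ne_of_gt hpos)
      have hpos' : ∀ j ∈ E.biUnion A, Mf (ρ n0) ≤ j := by
        intro j hj
        obtain ⟨b, hb, hjb⟩ := Finset.mem_biUnion.1 hj
        have h1 : n0 ≤ b := Nat.sInf_le hb
        have h2 : Mf (ρ n0) ≤ (Finset.range (b + 1)).sup (fun q => Mf (ρ q)) :=
          Finset.le_sup (f := fun q => Mf (ρ q)) (Finset.mem_range.2 (by omega))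
        have h3 := hBpos b j hjb
        simp only [hTst] at h3
        omega
      have hmemS : N (∑ j ∈ E.biUnion A, b' j • x j) ∈ Sσ (ρ n0) (Mf (ρ n0)) :=
        ⟨b', E.biUnion A, hUG, hmass', hpos', rfl⟩
      have hwlb : τs * (1 - ε1) < N (∑ j ∈ E.biUnion A, b' j • x j) :=
        lt_of_lt_of_le (hMf (ρ n0)) (csInf_le (hSbdd _ _) hmemS)
      have hveq : ∑ n ∈ E, α n • y n = tot • ∑ j ∈ E.biUnion A, b' j • x j := by
        rw [hrw E α, Finset.smul_sum]
        refine Finset.sum_congr rfl ?_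
        intro j _
        rw [smul_smul]
        congr 1
        simp only [hb']
        rw [← mul_assoc, mul_inv_cancel₀ (ne_of_gt hpos), one_mul]
      rw [hveq, hNhom, abs_of_pos hpos]
      have hinv : c1⁻¹ = τs * (1 - ε1) := by
        rw [hc1, inv_inv]
      rw [hinv]
      calc τs * (1 - ε1) * tot ≤ N (∑ j ∈ E.biUnion A, b' j • x j) * tot :=
            mul_le_mul_of_nonneg_right hwlb.le htotnn
        _ = tot * N (∑ j ∈ E.biUnion A, b' j • x j) := by ring
  -- assemble the conclusion
  have hblocking : ∀ n, y n = ∑ j ∈ A n, aglob j • x j := by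
    intro n
    simp only [hy]
    refine Finset.sum_congr rfl ?_
    intro j hj
    rw [haglob_eq n j hj]
  refine ⟨y, A, aglob, 1, one_pos, ⟨hynz, hsucc, hblocking⟩, ?_, ?_⟩
  · -- (i): (1+ε)-ℓ₁ spreading model for the equivalent norm
    refine ⟨⟨hynz, CN * Kx / cN, by positivity, hybasicN⟩,
      c1, C1, hc1pos, hC1pos, hprodi, ?_⟩
    intro E hEF α
    exact ⟨hest_lower E hEF α, hest_upper E α⟩
  · -- (ii): C-ℓ₁ spreading model for the original norm, with λ = 1
    have h1y : (fun n => (1 : ℝ) • y n) = y := by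
      funext n
      rw [one_smul]
    rw [h1y]
    refine ⟨⟨hynz, Kx, hKx, hybasicX⟩, cx, Cx, hcx, hCx, hprod, ?_⟩
    intro E hEF α
    constructor
    · rcases Finset.eq_empty_or_nonempty E with rfl | hEne
      · simp [hN0]
      · obtain ⟨_, hUF⟩ := hUnion E hEF hEne
        have h1 := (hxest (E.biUnion A) hUF (cglob α)).1
        rw [hrwmass E α] at h1
        rw [hrw E α]
        exact h1
    · calc ‖∑ n ∈ E, α n • y n‖ ≤ ∑ n ∈ E, |α n| * ‖y n‖ :=
            seminorm_sum_le (fun u v => norm_add_le u v)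
              (fun a u => by rw [norm_smul, Real.norm_eq_abs]) E α y
        _ ≤ ∑ n ∈ E, |α n| * Cx := by
            refine Finset.sum_le_sum ?_
            intro n _
            exact mul_le_mul_of_nonneg_left (hynorm_ub n) (abs_nonneg _)
        _ = Cx * ∑ n ∈ E, |α n| := by rw [← Finset.sum_mul]; ring

end Stmt10Aux

/-- If `(x_i)` is a `C`-`ℓ₁^{ω^ξ}` spreading model in `(X, ‖·‖)` and `|·|`
is an equivalent norm on `X`, then for each `ε > 0` there are a blocking `(y_i)` of `(x_i)`
and `λ > 0` such that `(y_i)` is a `(1+ε)`-`ℓ₁^{ω^ξ}` spreading model in `(X, |·|)` and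
`(λ y_i)` is a `C`-`ℓ₁^{ω^ξ}` spreading model in `(X, ‖·‖)`. -/
theorem statement10 {X : Type*} [NormedAddCommGroup X] [NormedSpace ℝ X] [CompleteSpace X]
    (SS : SchreierSystem) (ξ : Ordinal) (hξ : ξ < omega1)
    (C : ℝ) (hC : 1 ≤ C) (x : ℕ → X)
    (hx : IsL1SMWrt (fun v => ‖v‖) (SS.S (Ordinal.omega0 ^ ξ)) C x)
    (N : X → ℝ) (hN : IsEquivNorm N) (ε : ℝ) (hε : 0 < ε) :
    ∃ (y : ℕ → X) (E : ℕ → Finset ℕ) (a : ℕ → ℝ) (lam : ℝ), 0 < lam ∧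
      IsBlockingOf x y E a ∧
      IsL1SMWrt N (SS.S (Ordinal.omega0 ^ ξ)) (1 + ε) y ∧
      IsL1SMWrt (fun v => ‖v‖) (SS.S (Ordinal.omega0 ^ ξ)) C (fun n => lam • y n) := by
  rcases eq_or_ne ξ 0 with rfl | hξ0
  · -- the case ξ = 0 : the family is the Schreier family 𝓢₁
    rw [Ordinal.opow_zero] at hx ⊢
    have hS1 := S_one SS
    refine main_abstract x (SS.S 1) C hx N hN ε hε ℕ ⟨0⟩
      (fun s => {A : Finset ℕ | A ∈ schreierOne ∧ A.card ≤ s + 1}) ?_ ?_ ?_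
    · intro s
      refine ⟨0, fun A hA _ => ?_⟩
      rw [hS1]
      exact hA.1
    · intro s
      refine ⟨1, fun j hj => ⟨?_, ?_⟩⟩
      · intro m hm
        rw [Finset.mem_singleton] at hm
        rw [Finset.card_singleton]
        omega
      · rw [Finset.card_singleton]; omega
    · intro s
      refine ⟨fun q => (q + 1) * (s + 1), fun b => (b + 1) * (s + 1), ?_⟩
      intro E hEF hEne Fb hFG hFne hFsucc hFg
      have hES : E ∈ schreierOne := by rw [hS1] at hEF; exact hEF
      set n0 := sInf ((E : Finset ℕ) : Set ℕ) with hn0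
      have hn0E : n0 ∈ E := Nat.sInf_mem ((Finset.coe_nonempty).2 hEne)
      have hEcard : E.card ≤ n0 := hES n0 hn0E
      have hcard : (E.biUnion Fb).card ≤ E.card * (s + 1) := by
        calc (E.biUnion Fb).card ≤ ∑ b ∈ E, (Fb b).card := Finset.card_biUnion_le
          _ ≤ ∑ _b ∈ E, (s + 1) := Finset.sum_le_sum (fun b hb => (hFG b hb).2)
          _ = E.card * (s + 1) := by rw [Finset.sum_const, smul_eq_mul]
      have hcard2 : (E.biUnion Fb).card ≤ (n0 + 1) * (s + 1) := by
        calc (E.biUnion Fb).card ≤ E.card * (s + 1) := hcard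
          _ ≤ (n0 + 1) * (s + 1) := mul_le_mul_left (by omega) _
      have hmem : ∀ m ∈ E.biUnion Fb, (n0 + 1) * (s + 1) ≤ m := by
        intro m hm
        obtain ⟨b, hb, hmb⟩ := Finset.mem_biUnion.1 hm
        have h1 : n0 ≤ b := Nat.sInf_le hb
        have h2 := hFg b hb m hmb
        calc (n0 + 1) * (s + 1) ≤ (b + 1) * (s + 1) := mul_le_mul_left (by omega) _
          _ ≤ m := h2
      have hSch : E.biUnion Fb ∈ schreierOne := by
        intro m hm
        exact le_trans hcard2 (hmem m hm)
      refine ⟨⟨hSch, ?_⟩, ?_⟩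
      · show (E.biUnion Fb).card ≤ (n0 + 1) * (s + 1) + 1
        omega
      rw [hS1]
      exact hSch
  · -- the case ξ ≥ 1 : ω^ξ is an additively indecomposable limit ordinal
    set γ := Ordinal.omega0 ^ ξ with hγdef
    have hγΩ : γ < omega1 := aux_opow_lt_omega1 ξ hξ
    have hξpos : 0 < ξ := pos_iff_ne_zero.2 hξ0
    have h1γ : 1 < γ := by
      calc (1 : Ordinal) < Ordinal.omega0 := Ordinal.one_lt_omega0
        _ = Ordinal.omega0 ^ (1 : Ordinal) := (Ordinal.opow_one _).symm
        _ ≤ γ := Ordinal.opow_le_opow_right Ordinal.omega0_pos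
            (Ordinal.one_le_iff_ne_zero.2 hξ0)
    have habs : ∀ a, a < γ → a + γ = γ := fun a ha => Ordinal.add_absorp ha le_rfl
    have hγne : γ ≠ 0 := Ordinal.opow_ne_zero ξ Ordinal.omega0_ne_zero
    have hγlim : Order.IsSuccLimit γ := by
      refine Ordinal.isSuccLimit_iff.2 ⟨hγne, Order.isSuccPrelimit_of_succ_lt ?_⟩
      intro a ha
      have h2 : a + 1 < a + γ := add_lt_add_right h1γ a
      rw [habs a ha] at h2
      rw [← Ordinal.add_one_eq_succ]
      exact h2
    have hγpos : (0 : Ordinal) < γ := Ordinal.opow_pos ξ Ordinal.omega0_pos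
    refine main_abstract x (SS.S γ) C hx N hN ε hε {δ : Ordinal // δ < γ}
      ⟨⟨0, hγpos⟩⟩ (fun i => SS.S i.val) ?_ ?_ ?_
    · intro i
      exact S_tail SS γ hγΩ i.val i.2.le
    · intro i
      exact S_single SS (lt_trans i.2 hγΩ)
    · rintro ⟨δ, hδ⟩
      have hseq : ∀ q, SS.seq γ q < γ := SS.seq_lt γ hγΩ hγlim
      have hδΩ : δ < omega1 := lt_trans hδ hγΩ
      choose gq hgq_id hgq using fun q =>
        S_conv SS (SS.seq γ q) (lt_trans (hseq q) hγΩ) δ hδΩ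
      obtain ⟨gγ, hgγ_id, hgγ⟩ := S_conv SS γ hγΩ δ hδΩ
      refine ⟨fun q => ⟨δ + SS.seq γ q, ?_⟩,
        fun b => max (gγ b) ((Finset.range (b + 1)).sup fun q => gq q b), ?_⟩
      · have h2 : δ + SS.seq γ q < δ + γ := add_lt_add_right (hseq q) δ
        rwa [habs δ hδ] at h2
      · intro E hEF hEne Fb hFG hFne hFsucc hFg
        set n0 := sInf ((E : Finset ℕ) : Set ℕ) with hn0
        have hEq0 : E ∈ SS.S (SS.seq γ n0) := S_canon SS hγΩ hγlim hEF hEne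
        constructor
        · refine hgq n0 E hEq0 Fb hFG hFne hFsucc ?_
          intro b hb u hu
          have h1 : n0 ≤ b := Nat.sInf_le hb
          have h2 : gq n0 b ≤ (Finset.range (b + 1)).sup (fun q => gq q b) :=
            Finset.le_sup (f := fun q => gq q b) (Finset.mem_range.2 (by omega))
          have h3 : max (gγ b) ((Finset.range (b + 1)).sup fun q => gq q b) ≤ u :=
            hFg b hb u hu
          omega
        · have hU : E.biUnion Fb ∈ SS.S (δ + γ) := by
            refine hgγ E hEF Fb hFG hFne hFsucc ?_
            intro b hb u hu
            have h3 : max (gγ b) ((Finset.range (b + 1)).sup fun q => gq q b) ≤ u :=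
              hFg b hb u hu
            omega
          rwa [habs δ hδ] at hU
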